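/- For every real number a with 0 < a < 1/2, Γ(1/2)·Γ(a/2+1) / (Γ(a+1)·Γ(1/2 - a/2)) = 2^{-a} · cos(πa/2). -/
import Mathlib

open Real

theorem kummer_special (a : ℝ) (ha0 : 0 < a) (ha1 : a < 1 / 2) :
    Real.Gamma (1 / 2) * Real.Gamma (a / 2 + 1) /
      (Real.Gamma (a + 1) * Real.Gamma (1 / 2 - a / 2)) =
    2 ^ (-a) * Real.cos (π * a / 2) := by
  have hdup := Real.Gamma_mul_Gamma_add_half (a / 2)
  have hrefl := Real.Gamma_mul_Gamma_one_sub (a / 2 + 1 / 2)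
  rw [show (1 : ℝ) - (a / 2 + 1 / 2) = 1 / 2 - a / 2 by ring] at hrefl
  have hsin : Real.sin (π * (a / 2 + 1 / 2)) = Real.cos (π * a / 2) := by
    rw [show π * (a / 2 + 1 / 2) = π * a / 2 + π / 2 by ring, Real.sin_add_pi_div_two]
  rw [hsin] at hrefl
  have h1 : Real.Gamma (a / 2 + 1) = a / 2 * Real.Gamma (a / 2) :=
    Real.Gamma_add_one (by positivity)
  have h2 : Real.Gamma (a + 1) = a * Real.Gamma a :=
    Real.Gamma_add_one (by positivity)
  have h3 : Real.Gamma (1 / 2) = Real.sqrt π := Real.Gamma_one_half_eq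
  have hGa : 0 < Real.Gamma a := Real.Gamma_pos_of_pos ha0
  have hGa2 : 0 < Real.Gamma (a / 2) := Real.Gamma_pos_of_pos (by positivity)
  have hGh : 0 < Real.Gamma (a / 2 + 1 / 2) := Real.Gamma_pos_of_pos (by positivity)
  have hGm : 0 < Real.Gamma (1 / 2 - a / 2) := Real.Gamma_pos_of_pos (by linarith)
  have hsq : Real.sqrt π * Real.sqrt π = π := Real.mul_self_sqrt pi_pos.le
  have hpow : (2 : ℝ) ^ (1 - a) = 2 * 2 ^ (-a) := by
    rw [show (1 : ℝ) - a = 1 + (-a) by ring, Real.rpow_add two_pos, Real.rpow_one]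
  rw [show 2 * (a / 2) = a by ring, hpow] at hdup
  have hcospos : 0 < Real.cos (π * a / 2) := by
    apply Real.cos_pos_of_mem_Ioo
    constructor <;> nlinarith [pi_pos]
  have hc : Real.cos (π * a / 2) = π / (Real.Gamma (a / 2 + 1 / 2) * Real.Gamma (1 / 2 - a / 2)) := by
    rw [hrefl]
    field_simp
  rw [h1, h2, h3, hc]
  rw [mul_div_assoc']
  rw [div_eq_div_iff (by positivity) (by positivity)]
  linear_combination (√π * (a / 2) * Real.Gamma (1 / 2 - a / 2)) * hdup + (a * Real.Gamma (1 / 2 - a / 2) * Real.Gamma a * (2 ^ (-a) : ℝ)) * hsq
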